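/- Let ∇ be a Type B connection on ℝ⁺ × ℝ with C₁₁¹ = α − 1, C₁₂¹ = 0, C₂₂¹ = 0 for some real α ≠ 0. Then f(x¹,x²) = (x¹)^α satisfies the Yamabe soliton equation H(f) = 0. -/

import Mathlib

open Real

/-- Partial derivative ∂_i on ℝ². -/
noncomputable def pd (i : Fin 2) (f : ℝ × ℝ → ℝ) : ℝ × ℝ → ℝ :=
  fun p => if i = 0 then deriv (fun t => f (t, p.2)) p.1
           else deriv (fun t => f (p.1, t)) p.2

/-- Affine Hessian H(f)_{ij} = ∂_i∂_j f − Σ_k Γ_{ij}^k ∂_k f. -/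
noncomputable def Hess (Γ : Fin 2 → Fin 2 → Fin 2 → (ℝ × ℝ → ℝ))
    (f : ℝ × ℝ → ℝ) (i j : Fin 2) : ℝ × ℝ → ℝ :=
  fun p => pd i (pd j f) p - ∑ k, Γ i j k p * pd k f p

/-- Ricci tensor ρ_{jk} = ∂_i Γ_{jk}^i − ∂_j Γ_{ik}^i + Γ_{il}^i Γ_{jk}^l − Γ_{jl}^i Γ_{ik}^l. -/
noncomputable def Ric (Γ : Fin 2 → Fin 2 → Fin 2 → (ℝ × ℝ → ℝ)) (j k : Fin 2) :
    ℝ × ℝ → ℝ :=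
  fun p => (∑ i, pd i (Γ j k i) p) - (∑ i, pd j (Γ i k i) p)
    + (∑ i, ∑ l, Γ i l i p * Γ j k l p) - (∑ i, ∑ l, Γ j l i p * Γ i k l p)

/-- Symmetrized Ricci tensor. -/
noncomputable def RicS (Γ : Fin 2 → Fin 2 → Fin 2 → (ℝ × ℝ → ℝ)) (i j : Fin 2) :
    ℝ × ℝ → ℝ :=
  fun p => (Ric Γ i j p + Ric Γ j i p) / 2

/-- Covariant derivative of the Ricci tensor: (∇ρ)(i,j;k). -/
noncomputable def nabRic (Γ : Fin 2 → Fin 2 → Fin 2 → (ℝ × ℝ → ℝ)) (i j k : Fin 2) :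
    ℝ × ℝ → ℝ :=
  fun p => pd k (Ric Γ i j) p - ∑ l, Γ k i l p * Ric Γ l j p
    - ∑ l, Γ k j l p * Ric Γ i l p

/-- Type B Christoffel symbols Γ_{ij}^k = C_{ij}^k / x¹. -/
noncomputable def ΓB (C : Fin 2 → Fin 2 → Fin 2 → ℝ) :
    Fin 2 → Fin 2 → Fin 2 → (ℝ × ℝ → ℝ) :=
  fun i j k p => C i j k / p.1

/-- Type B with C₁₁¹ = α − 1, C₁₂¹ = C₂₂¹ = 0 and α ≠ 0: f = (x¹)^α is a
Yamabe soliton. -/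
theorem typeB_rpow_yamabe_soliton
    (C : Fin 2 → Fin 2 → Fin 2 → ℝ)
    (hsym : ∀ i j k, C i j k = C j i k)
    (α : ℝ) (hα : α ≠ 0)
    (h1 : C 0 0 0 = α - 1) (h2 : C 0 1 0 = 0) (h3 : C 1 1 0 = 0) :
    ∀ i j : Fin 2, ∀ p : ℝ × ℝ, 0 < p.1 →
      Hess (ΓB C) (fun q => q.1 ^ α) i j p = 0 := by
  intro i j p hp
  have hp0 : p.1 ≠ 0 := ne_of_gt hp
  have hpd0 : ∀ x : ℝ, x ≠ 0 → deriv (fun t : ℝ => t ^ α) x = α * x ^ (α - 1) := by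
    intro x hx
    rw [Real.deriv_rpow_const x α]
  have hd2 : deriv (fun t : ℝ => deriv (fun s : ℝ => s ^ α) t) p.1
      = α * (α - 1) * p.1 ^ (α - 2) := by
    have hev : (fun t : ℝ => deriv (fun s : ℝ => s ^ α) t)
        =ᶠ[nhds p.1] (fun t : ℝ => α * t ^ (α - 1)) := by
      filter_upwards [isOpen_Ioi.mem_nhds hp] with t ht
      exact hpd0 t (ne_of_gt ht)
    rw [hev.deriv_eq, deriv_const_mul _ (Real.differentiableAt_rpow_const_of_ne _ hp0),
      Real.deriv_rpow_const p.1 (α - 1), show α - 1 - 1 = α - 2 by ring]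
    ring
  have hrw : p.1 ^ (α - 1) = p.1 ^ (α - 2) * p.1 := by
    rw [show α - 1 = (α - 2) + 1 by ring, Real.rpow_add_one hp0]
  have h20 : C 1 0 0 = 0 := by rw [hsym]; exact h2
  fin_cases i <;> fin_cases j <;>
    simp only [Hess, ΓB, pd, Fin.sum_univ_two, Fin.isValue, if_true, if_false,
      Fin.mk_one, Fin.mk_zero, one_ne_zero, reduceIte, deriv_const', mul_zero,
      add_zero, deriv_const] <;>
    simp only [h1, h2, h3, h20, zero_div, zero_mul, sub_zero, sub_self, mul_zero] <;>
    rw [hd2, hpd0 p.1 hp0, hrw] <;> field_simp <;> ring
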